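/- arXiv:0902.4587 — 3 statements merged into one kernel-verified Lean document; each statement's English description precedes it below -/
import Mathlib

section
/- If A ∈ ℝ^{p×q} and B ∈ ℝ^{r×s} are both rank-deficient matrices, then spark(A ⊗ B) = min{spark(A), spark(B)}. -/
open Classical Kronecker

/-- Number of nonzero entries of a vector. -/
noncomputable def sparsity {n : Type*} (x : n → ℝ) : ℕ := Set.ncard {i | x i ≠ 0}

/-- The spark of a matrix: the minimal number of nonzero entries of a nonzero kernel
vector; if the kernel is trivial we use the convention `spark A = (number of columns) + 1`. -/
noncomputable def spark {m n : Type*} [Fintype m] [Fintype n] (A : Matrix m n ℝ) : ℕ :=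
  if ∃ x : n → ℝ, x ≠ 0 ∧ A.mulVec x = 0 then
    sInf {k | ∃ x : n → ℝ, x ≠ 0 ∧ A.mulVec x = 0 ∧ sparsity x = k}
  else Fintype.card n + 1

/-- Mutual incoherence: the largest absolute inner product of two distinct columns. -/
noncomputable def mutInc {m n : Type*} [Fintype m] (A : Matrix m n ℝ) : ℝ :=
  sSup {v | ∃ i j, i ≠ j ∧ v = |∑ k, A k i * A k j|}

/-- Off-diagonal mutual incoherence of two matrices. -/
noncomputable def mutIncOD {m n : Type*} [Fintype m] (A B : Matrix m n ℝ) : ℝ :=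
  sSup {v | ∃ i j, i ≠ j ∧ v = |∑ k, A k i * B k j|}

/-- Diagonal mutual incoherence of two matrices. -/
noncomputable def mutIncD {m n : Type*} [Fintype m] (A B : Matrix m n ℝ) : ℝ :=
  sSup {v | ∃ i, v = |∑ k, A k i * B k i|}

/-- Mutual incoherence of a matrix whose columns are renormalized. -/
noncomputable def mutIncN {m n : Type*} [Fintype m] (C : Matrix m n ℝ) : ℝ :=
  sSup {v | ∃ i j, i ≠ j ∧
    v = |∑ k, C k i * C k j| /
        (Real.sqrt (∑ k, (C k i) ^ 2) * Real.sqrt (∑ k, (C k j) ^ 2))}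

/-- The `k`-restricted isometry constant of a matrix. -/
noncomputable def ripConst {m n : Type*} [Fintype m] [Fintype n] (k : ℕ)
    (A : Matrix m n ℝ) : ℝ :=
  sInf {δ | 0 ≤ δ ∧ ∀ x : n → ℝ, sparsity x ≤ k →
    (1 - δ) * ∑ i, (x i) ^ 2 ≤ ∑ i, (A.mulVec x i) ^ 2 ∧
    ∑ i, (A.mulVec x i) ^ 2 ≤ (1 + δ) * ∑ i, (x i) ^ 2}

/-- Iterated Kronecker product of a family of matrices (up to the standard
reindexing of the row/column index sets). -/
noncomputable def kronFamily {N : ℕ} {m n : Fin N → ℕ}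
    (A : ∀ i, Matrix (Fin (m i)) (Fin (n i)) ℝ) :
    Matrix (∀ i, Fin (m i)) (∀ i, Fin (n i)) ℝ :=
  fun r c => ∏ i, A i (r i) (c i)

lemma sparsity_eq_card {n : Type*} [Fintype n] (x : n → ℝ) :
    sparsity x = (Finset.univ.filter (fun i => x i ≠ 0)).card := by
  rw [sparsity, Set.ncard_eq_toFinset_card', Set.toFinset_setOf]

lemma spark_le {m n : Type*} [Fintype m] [Fintype n] (M : Matrix m n ℝ) (x : n → ℝ)
    (hx : x ≠ 0) (h : M.mulVec x = 0) : spark M ≤ sparsity x := by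
  rw [spark, if_pos ⟨x, hx, h⟩]
  exact Nat.sInf_le ⟨x, hx, h, rfl⟩

lemma spark_witness {m n : Type*} [Fintype m] [Fintype n] (M : Matrix m n ℝ)
    (h : ∃ x : n → ℝ, x ≠ 0 ∧ M.mulVec x = 0) :
    ∃ x : n → ℝ, x ≠ 0 ∧ M.mulVec x = 0 ∧ sparsity x = spark M := by
  rw [spark, if_pos h]
  obtain ⟨x, hx, hMx⟩ := h
  exact Nat.sInf_mem (⟨sparsity x, x, hx, hMx, rfl⟩ :
    Set.Nonempty {k | ∃ x : n → ℝ, x ≠ 0 ∧ M.mulVec x = 0 ∧ sparsity x = k})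

lemma sparsity_row_le {α β : Type*} [Fintype α] [Fintype β] (z : α × β → ℝ) (j0 : α) :
    sparsity (fun l => z (j0, l)) ≤ sparsity z := by
  rw [sparsity_eq_card, sparsity_eq_card]
  apply Finset.card_le_card_of_injOn (fun l => (j0, l))
  · intro l hl
    simp only [Finset.mem_coe, Finset.mem_filter, Finset.mem_univ, true_and] at hl ⊢
    exact hl
  · intro a _ b _ h
    exact (Prod.ext_iff.mp h).2

lemma sparsity_proj_le {α β : Type*} [Fintype α] [Fintype β] [Nonempty β]
    (u : α → ℝ) (z : α × β → ℝ) (h : ∀ j, u j ≠ 0 → ∃ l, z (j, l) ≠ 0) :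
    sparsity u ≤ sparsity z := by
  rw [sparsity_eq_card, sparsity_eq_card]
  apply Finset.card_le_card_of_injOn (fun j => (j, Classical.epsilon (fun l => z (j, l) ≠ 0)))
  · intro j hj
    simp only [Finset.mem_coe, Finset.mem_filter, Finset.mem_univ, true_and] at hj ⊢
    exact Classical.epsilon_spec (h j hj)
  · intro a _ b _ hab
    exact congrArg Prod.fst hab

lemma sparsity_single_right {α β : Type*} [Fintype α] [Fintype β] [DecidableEq β] (x : α → ℝ) (l0 : β) :
    sparsity (fun jl : α × β => if jl.2 = l0 then x jl.1 else 0) = sparsity x := by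
  unfold sparsity
  have hset : {jl : α × β | (if jl.2 = l0 then x jl.1 else 0) ≠ 0}
      = (fun j => (j, l0)) '' {j | x j ≠ 0} := by
    ext ⟨j, l⟩
    constructor
    · intro hjl
      simp only [Set.mem_setOf_eq] at hjl
      by_cases hl : l = l0
      · subst hl; exact ⟨j, by simpa using hjl, rfl⟩
      · simp [hl] at hjl
    · rintro ⟨a, ha, heq⟩
      obtain ⟨rfl, rfl⟩ := Prod.mk.injEq _ _ _ _ ▸ heq
      simpa using ha
  rw [hset, Set.ncard_image_of_injective _ (fun a b hab => congrArg Prod.fst hab)]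

lemma sparsity_single_left {α β : Type*} [Fintype α] [Fintype β] [DecidableEq α] (y : β → ℝ) (j0 : α) :
    sparsity (fun jl : α × β => if jl.1 = j0 then y jl.2 else 0) = sparsity y := by
  unfold sparsity
  have hset : {jl : α × β | (if jl.1 = j0 then y jl.2 else 0) ≠ 0}
      = (fun l => (j0, l)) '' {l | y l ≠ 0} := by
    ext ⟨j, l⟩
    constructor
    · intro hjl
      simp only [Set.mem_setOf_eq] at hjl
      by_cases hj : j = j0
      · subst hj; exact ⟨l, by simpa using hjl, rfl⟩
      · simp [hj] at hjl
    · rintro ⟨a, ha, heq⟩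
      obtain ⟨rfl, rfl⟩ := Prod.mk.injEq _ _ _ _ ▸ heq
      simpa using ha
  rw [hset, Set.ncard_image_of_injective _ (fun a b hab => congrArg Prod.snd hab)]

lemma kron_mulVec_apply {p q r s : ℕ} (A : Matrix (Fin p) (Fin q) ℝ)
    (B : Matrix (Fin r) (Fin s) ℝ) (z : Fin q × Fin s → ℝ) (i : Fin p) (k : Fin r) :
    (A ⊗ₖ B).mulVec z (i, k) = ∑ j, ∑ l, A i j * B k l * z (j, l) := by
  show ∑ jl : Fin q × Fin s, (A ⊗ₖ B) (i, k) jl * z jl = _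
  rw [Fintype.sum_prod_type]
  rfl

theorem stmt4 {p q r s : ℕ} (A : Matrix (Fin p) (Fin q) ℝ)
    (B : Matrix (Fin r) (Fin s) ℝ)
    (hA : ∃ x : Fin q → ℝ, x ≠ 0 ∧ A.mulVec x = 0)
    (hB : ∃ x : Fin s → ℝ, x ≠ 0 ∧ B.mulVec x = 0) :
    spark (A ⊗ₖ B) = min (spark A) (spark B) := by
  obtain ⟨x0, hx0, hAx0⟩ := hA
  obtain ⟨y0, hy0, hBy0⟩ := hB
  obtain ⟨j1, hj1⟩ := Function.ne_iff.mp hx0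
  obtain ⟨l1, hl1⟩ := Function.ne_iff.mp hy0
  haveI : Nonempty (Fin q) := ⟨j1⟩
  haveI : Nonempty (Fin s) := ⟨l1⟩
  -- generic kernel construction from a kernel vector of A
  have keyA : ∀ x : Fin q → ℝ, x ≠ 0 → A.mulVec x = 0 →
      ∃ z : Fin q × Fin s → ℝ, z ≠ 0 ∧ (A ⊗ₖ B).mulVec z = 0 ∧ sparsity z = sparsity x := by
    intro x hx hAx
    obtain ⟨ja, hja⟩ := Function.ne_iff.mp hx
    refine ⟨fun jl => if jl.2 = l1 then x jl.1 else 0, ?_, ?_, sparsity_single_right x l1⟩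
    · intro h
      have := congrFun h (ja, l1)
      simp only [Pi.zero_apply, if_pos rfl] at this
      exact hja this
    · funext ik
      obtain ⟨i, k⟩ := ik
      rw [kron_mulVec_apply]
      have h1 : ∀ j : Fin q, ∑ l, A i j * B k l * (if l = l1 then x j else 0)
          = (A i j * x j) * B k l1 := by
        intro j
        rw [Finset.sum_eq_single l1]
        · simp; ring
        · intro b _ hb; simp [hb]
        · intro h; exact absurd (Finset.mem_univ l1) h
      simp only [h1, ← Finset.sum_mul]
      have : A.mulVec x i = 0 := congrFun hAx i
      simp only [Matrix.mulVec, dotProduct] at this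
      rw [this, zero_mul]
      rfl
  have keyB : ∀ y : Fin s → ℝ, y ≠ 0 → B.mulVec y = 0 →
      ∃ z : Fin q × Fin s → ℝ, z ≠ 0 ∧ (A ⊗ₖ B).mulVec z = 0 ∧ sparsity z = sparsity y := by
    intro y hy hBy
    obtain ⟨la, hla⟩ := Function.ne_iff.mp hy
    refine ⟨fun jl => if jl.1 = j1 then y jl.2 else 0, ?_, ?_, sparsity_single_left y j1⟩
    · intro h
      have := congrFun h (j1, la)
      simp only [Pi.zero_apply, if_pos rfl] at this
      exact hla this
    · funext ik
      obtain ⟨i, k⟩ := ik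
      rw [kron_mulVec_apply]
      have h1 : ∀ j : Fin q, ∑ l, A i j * B k l * (if j = j1 then y l else 0)
          = if j = j1 then A i j1 * ∑ l, B k l * y l else 0 := by
        intro j
        by_cases hj : j = j1
        · subst hj
          simp only [eq_self_iff_true, if_true, Finset.mul_sum]
          refine Finset.sum_congr rfl fun l _ => by ring
        · simp [hj]
      simp only [h1, Finset.sum_ite_eq', Finset.mem_univ, if_pos]
      have : B.mulVec y k = 0 := congrFun hBy k
      simp only [Matrix.mulVec, dotProduct] at this
      rw [this, mul_zero]
      rfl
  -- kernel of A ⊗ₖ B is nontrivial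
  obtain ⟨zA, hzA, hzAker, _⟩ := keyA x0 hx0 hAx0
  have hKexists : ∃ z : Fin q × Fin s → ℝ, z ≠ 0 ∧ (A ⊗ₖ B).mulVec z = 0 := ⟨zA, hzA, hzAker⟩
  apply le_antisymm
  · -- spark (A⊗B) ≤ min
    apply le_min
    · obtain ⟨x, hx, hAx, hsx⟩ := spark_witness A ⟨x0, hx0, hAx0⟩
      obtain ⟨z, hz, hzker, hsz⟩ := keyA x hx hAx
      calc spark (A ⊗ₖ B) ≤ sparsity z := spark_le _ z hz hzker
        _ = spark A := by rw [hsz, hsx]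
    · obtain ⟨y, hy, hBy, hsy⟩ := spark_witness B ⟨y0, hy0, hBy0⟩
      obtain ⟨z, hz, hzker, hsz⟩ := keyB y hy hBy
      calc spark (A ⊗ₖ B) ≤ sparsity z := spark_le _ z hz hzker
        _ = spark B := by rw [hsz, hsy]
  · -- min ≤ spark (A⊗B)
    obtain ⟨z, hz, hzker, hsz⟩ := spark_witness (A ⊗ₖ B) hKexists
    rw [← hsz]
    by_cases hcase : ∀ j : Fin q, B.mulVec (fun l => z (j, l)) = 0
    · -- every row is in ker B
      obtain ⟨⟨j0, l0⟩, hz0⟩ := Function.ne_iff.mp hz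
      have hrow : (fun l => z (j0, l)) ≠ 0 := by
        intro h
        exact hz0 (congrFun h l0)
      calc min (spark A) (spark B) ≤ spark B := min_le_right _ _
        _ ≤ sparsity (fun l => z (j0, l)) := spark_le B _ hrow (hcase j0)
        _ ≤ sparsity z := sparsity_row_le z j0
    · push_neg at hcase
      obtain ⟨j2, hj2⟩ := hcase
      obtain ⟨k0, hk0⟩ := Function.ne_iff.mp hj2
      set u : Fin q → ℝ := fun j => B.mulVec (fun l => z (j, l)) k0 with hu
      have hune : u ≠ 0 := by
        intro h
        exact hk0 (congrFun h j2)
      have hAu : A.mulVec u = 0 := by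
        funext i
        show ∑ j, A i j * u j = 0
        have h1 : ∀ j : Fin q, A i j * u j = ∑ l, A i j * B k0 l * z (j, l) := by
          intro j
          simp only [hu, Matrix.mulVec, dotProduct, Finset.mul_sum]
          congr 1; funext l; ring
        simp only [h1]
        rw [← kron_mulVec_apply]
        exact congrFun hzker (i, k0)
      have hproj : ∀ j, u j ≠ 0 → ∃ l, z (j, l) ≠ 0 := by
        intro j hj
        by_contra hcon
        push_neg at hcon
        apply hj
        show ∑ l, B k0 l * z (j, l) = 0
        exact Finset.sum_eq_zero fun l _ => by rw [hcon l, mul_zero]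
      calc min (spark A) (spark B) ≤ spark A := min_le_left _ _
        _ ≤ sparsity u := spark_le A u hune hAu
        _ ≤ sparsity z := sparsity_proj_le u z hproj
end

section
/- For rank-deficient matrices A₁, …, A_N, spark(A₁ ⊗ ⋯ ⊗ A_N) = min over 1 ≤ i ≤ N of spark(A_i). -/
open Classical Kronecker

section Aux

lemma sparsity_le_of_map {α β : Type*} [Fintype α] [Fintype β] {x : α → ℝ} {y : β → ℝ}
    (f : β → α) (hf : Function.Injective f) (h : ∀ b, y b ≠ 0 → x (f b) ≠ 0) :
    sparsity y ≤ sparsity x :=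
  Set.ncard_le_ncard_of_injOn f (fun b hb => h b hb) hf.injOn (Set.toFinite _)

lemma sparsity_comp_equiv {α β : Type*} [Fintype α] [Fintype β] (x : α → ℝ) (e : β ≃ α) :
    sparsity (fun b => x (e b)) = sparsity x :=
  le_antisymm (sparsity_le_of_map e e.injective fun _ hb => hb)
    (sparsity_le_of_map e.symm e.symm.injective fun a ha => by simpa using ha)

lemma sparsity_pos {α : Type*} [Fintype α] {x : α → ℝ} (hx : x ≠ 0) : 0 < sparsity x := by
  obtain ⟨a, ha⟩ : ∃ a, x a ≠ 0 := by
    by_contra h; push_neg at h; exact hx (funext h)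
  exact (Set.ncard_pos (Set.toFinite _)).mpr ⟨a, ha⟩

lemma sparsity_single {k : ℕ} (a : Fin k) :
    sparsity (Pi.single a (1 : ℝ) : Fin k → ℝ) = 1 := by
  have : {i | (Pi.single a (1 : ℝ) : Fin k → ℝ) i ≠ 0} = {a} := by
    ext i
    simp [Pi.single_apply]
  rw [sparsity, this, Set.ncard_singleton]

lemma spark_le_sparsity {m n : Type*} [Fintype m] [Fintype n] {A : Matrix m n ℝ}
    {x : n → ℝ} (hx : x ≠ 0) (hAx : A.mulVec x = 0) : spark A ≤ sparsity x := by
  rw [spark, if_pos ⟨x, hx, hAx⟩]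
  exact Nat.sInf_le ⟨x, hx, hAx, rfl⟩

lemma spark_exists {m n : Type*} [Fintype m] [Fintype n] {A : Matrix m n ℝ}
    (h : ∃ x : n → ℝ, x ≠ 0 ∧ A.mulVec x = 0) :
    ∃ x : n → ℝ, x ≠ 0 ∧ A.mulVec x = 0 ∧ sparsity x = spark A := by
  obtain ⟨x, hx, hAx⟩ := h
  rw [spark, if_pos ⟨x, hx, hAx⟩]
  exact Nat.sInf_mem (⟨sparsity x, x, hx, hAx, rfl⟩ :
    Set.Nonempty {k | ∃ x : n → ℝ, x ≠ 0 ∧ A.mulVec x = 0 ∧ sparsity x = k})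

lemma kron2_lower {m₁ n₁ m₂ n₂ : Type*} [Fintype m₁] [Fintype n₁] [Fintype m₂] [Fintype n₂]
    (A : Matrix m₁ n₁ ℝ) (B : Matrix m₂ n₂ ℝ) (x : n₁ × n₂ → ℝ) (hx : x ≠ 0)
    (hk : ∀ r₁ r₂, ∑ c₁, ∑ c₂, A r₁ c₁ * B r₂ c₂ * x (c₁, c₂) = 0) :
    (∃ y : n₁ → ℝ, y ≠ 0 ∧ A.mulVec y = 0 ∧ sparsity y ≤ sparsity x) ∨
    (∃ y : n₂ → ℝ, y ≠ 0 ∧ B.mulVec y = 0 ∧ sparsity y ≤ sparsity x) := by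
  by_cases hZ : ∀ c₁ r₂, ∑ c₂, B r₂ c₂ * x (c₁, c₂) = 0
  · right
    obtain ⟨⟨c₁, c₂⟩, hc⟩ : ∃ p, x p ≠ 0 := by
      by_contra h; push_neg at h; exact hx (funext h)
    refine ⟨fun d => x (c₁, d), fun h0 => hc (congrFun h0 c₂), ?_, ?_⟩
    · funext r₂
      simpa [Matrix.mulVec, dotProduct] using hZ c₁ r₂
    · exact sparsity_le_of_map (fun d => (c₁, d))
        (fun a b h => (Prod.ext_iff.mp h).2) (fun _ hb => hb)
  · left
    push_neg at hZ
    obtain ⟨c₁s, r₂s, hzs⟩ := hZ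
    set y : n₁ → ℝ := fun c₁ => ∑ c₂, B r₂s c₂ * x (c₁, c₂) with hy
    have hAy : A.mulVec y = 0 := by
      funext r₁
      have h0 := hk r₁ r₂s
      have he : A.mulVec y r₁ = ∑ c₁, ∑ c₂, A r₁ c₁ * B r₂s c₂ * x (c₁, c₂) := by
        rw [Matrix.mulVec, dotProduct]
        refine Finset.sum_congr rfl fun c₁ _ => ?_
        rw [hy, Finset.mul_sum]
        exact Finset.sum_congr rfl fun c₂ _ => by ring
      rw [he, h0]; rfl
    have hne : Nonempty n₂ := by
      by_contra h
      exact hzs (by rw [Finset.sum_eq_zero]; intro c₂ _; exact absurd ⟨c₂⟩ h)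
    refine ⟨y, fun h0 => hzs (congrFun h0 c₁s), hAy, ?_⟩
    refine sparsity_le_of_map
      (fun c₁ => (c₁, if h : ∃ d, x (c₁, d) ≠ 0 then h.choose else Classical.arbitrary n₂))
      (fun a b h => (Prod.ext_iff.mp h).1) ?_
    intro c₁ hc₁
    have hex : ∃ d, x (c₁, d) ≠ 0 := by
      by_contra h; push_neg at h
      exact hc₁ (by rw [hy]; simp [h])
    simpa [dif_pos hex] using hex.choose_spec

lemma kron_mulVec_prod {N : ℕ} {m n : Fin N → ℕ} (A : ∀ i, Matrix (Fin (m i)) (Fin (n i)) ℝ)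
    (w : ∀ i, Fin (n i) → ℝ) :
    (kronFamily A).mulVec (fun c => ∏ i, w i (c i)) =
      fun r => ∏ i, (A i).mulVec (w i) (r i) := by
  funext r
  rw [Matrix.mulVec, dotProduct]
  have h1 : ∀ i, (A i).mulVec (w i) (r i) = ∑ t, A i (r i) t * w i t := fun i => rfl
  simp only [h1, Finset.prod_univ_sum, Fintype.piFinset_univ, kronFamily]
  exact Finset.sum_congr rfl fun c _ => (Finset.prod_mul_distrib).symm

lemma sparsity_key {α : Type*} [Fintype α] (x : α → ℝ) :
    sparsity x = (Finset.univ.filter (fun a => x a ≠ 0)).card := by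
  rw [sparsity, Set.ncard_eq_toFinset_card']
  congr 1
  ext a; simp

lemma sparsity_prod {N : ℕ} {n : Fin N → ℕ} (w : ∀ i, Fin (n i) → ℝ) :
    sparsity (fun c : ∀ i, Fin (n i) => ∏ i, w i (c i)) = ∏ i, sparsity (w i) := by
  rw [sparsity_key]
  have h2 : (Finset.univ.filter fun c : ∀ i, Fin (n i) => (∏ i, w i (c i)) ≠ 0)
      = Fintype.piFinset (fun i => Finset.univ.filter fun t => w i t ≠ 0) := by
    ext c
    simp [Fintype.mem_piFinset, Finset.prod_ne_zero_iff]
  rw [h2, Fintype.card_piFinset]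
  exact Finset.prod_congr rfl fun i _ => (sparsity_key (w i)).symm

lemma kron_lower : ∀ {N : ℕ} {m n : Fin N → ℕ}
    (A : ∀ i, Matrix (Fin (m i)) (Fin (n i)) ℝ)
    (x : (∀ i, Fin (n i)) → ℝ), x ≠ 0 → (kronFamily A).mulVec x = 0 →
    ∃ i, ∃ y : Fin (n i) → ℝ, y ≠ 0 ∧ (A i).mulVec y = 0 ∧ sparsity y ≤ sparsity x := by
  intro N
  induction N with
  | zero =>
    intro m n A x hx hk
    exfalso
    apply hx
    funext c
    have h0 := congrFun hk (fun i => i.elim0)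
    have : (kronFamily A).mulVec x (fun i => i.elim0) = x c := by
      rw [Matrix.mulVec, dotProduct]
      rw [Fintype.sum_unique]
      simp only [kronFamily, Finset.univ_eq_empty, Finset.prod_empty, one_mul]
      exact congrArg x (Subsingleton.elim _ _)
    rw [this] at h0
    exact h0
  | succ N ih =>
    intro m n A x hx hk
    set e : Fin (n 0) × (∀ i : Fin N, Fin (n i.succ)) ≃ (∀ i : Fin (N + 1), Fin (n i)) :=
      Fin.consEquiv (fun i => Fin (n i)) with he
    set x' : Fin (n 0) × (∀ i : Fin N, Fin (n i.succ)) → ℝ := fun p => x (e p) with hx'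
    have hx'ne : x' ≠ 0 := by
      intro h0
      apply hx
      funext c
      have := congrFun h0 (e.symm c)
      simpa [hx', e.apply_symm_apply] using this
    have hk' : ∀ (r₁ : Fin (m 0)) (r₂ : ∀ i : Fin N, Fin (m i.succ)),
        ∑ c₁, ∑ c₂, A 0 r₁ c₁ * (kronFamily (fun i : Fin N => A i.succ)) r₂ c₂ * x' (c₁, c₂)
          = 0 := by
      intro r₁ r₂
      have h0 := congrFun hk (Fin.cons r₁ r₂)
      rw [Matrix.mulVec, dotProduct, Pi.zero_apply] at h0
      rw [← Equiv.sum_comp e (fun c => kronFamily A (Fin.cons r₁ r₂) c * x c)] at h0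
      rw [Fintype.sum_prod_type] at h0
      rw [← h0]
      refine Finset.sum_congr rfl fun c₁ _ => Finset.sum_congr rfl fun c₂ _ => ?_
      have hcons : e (c₁, c₂) = Fin.cons c₁ c₂ := rfl
      rw [hcons]
      simp only [kronFamily, hx', hcons]
      rw [Fin.prod_univ_succ]
      simp [Fin.cons_zero, Fin.cons_succ, mul_assoc]
    have hsp : sparsity x' = sparsity x := sparsity_comp_equiv x e
    rcases kron2_lower (A 0) (kronFamily (fun i : Fin N => A i.succ)) x' hx'ne hk' with
      ⟨y, hy, hAy, hsy⟩ | ⟨y, hy, hAy, hsy⟩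
    · exact ⟨0, y, hy, hAy, hsp ▸ hsy⟩
    · obtain ⟨i, z, hz, hAz, hsz⟩ := ih (fun i : Fin N => A i.succ) y hy hAy
      exact ⟨i.succ, z, hz, hAz, le_trans hsz (hsp ▸ hsy)⟩

lemma kron_upper {N : ℕ} {m n : Fin N → ℕ}
    (A : ∀ i, Matrix (Fin (m i)) (Fin (n i)) ℝ)
    (hker : ∀ i, ∃ x : Fin (n i) → ℝ, x ≠ 0 ∧ (A i).mulVec x = 0) (i : Fin N) :
    ∃ z : (∀ j, Fin (n j)) → ℝ, z ≠ 0 ∧ (kronFamily A).mulVec z = 0 ∧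
      sparsity z = spark (A i) := by
  have hn : ∀ j, 0 < n j := by
    intro j
    obtain ⟨x, hx, -⟩ := hker j
    by_contra h
    exact hx (funext fun c => absurd c.pos h)
  obtain ⟨xi, hxi, hAxi, hsxi⟩ := spark_exists (hker i)
  set w : ∀ j, Fin (n j) → ℝ :=
    Function.update (fun j => Pi.single (⟨0, hn j⟩ : Fin (n j)) (1 : ℝ)) i xi with hw
  have hwi : w i = xi := by rw [hw]; simp
  have hwj : ∀ j, j ≠ i → sparsity (w j) = 1 := by
    intro j hj
    rw [hw, Function.update_of_ne hj]
    exact sparsity_single _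
  set z : (∀ j, Fin (n j)) → ℝ := fun c => ∏ j, w j (c j) with hz
  have hsz : sparsity z = spark (A i) := by
    rw [hz, sparsity_prod]
    rw [Finset.prod_eq_single i (fun j _ hj => hwj j hj) (fun h => absurd (Finset.mem_univ i) h)]
    rw [hwi, hsxi]
  refine ⟨z, ?_, ?_, hsz⟩
  · intro h0
    have hz0 : sparsity z = 0 := by
      rw [h0, sparsity]
      convert Set.ncard_empty ((j : Fin N) → Fin (n j))
      ext c; simp
    have hpos := sparsity_pos hxi
    rw [hsxi] at hpos
    omega
  · rw [hz, kron_mulVec_prod]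
    funext r
    refine Finset.prod_eq_zero (Finset.mem_univ i) ?_
    rw [hwi, hAxi]
    rfl

end Aux

theorem stmt7 {N : ℕ} (hN : 0 < N) {m n : Fin N → ℕ}
    (A : ∀ i, Matrix (Fin (m i)) (Fin (n i)) ℝ)
    (hker : ∀ i, ∃ x : Fin (n i) → ℝ, x ≠ 0 ∧ (A i).mulVec x = 0) :
    spark (kronFamily A) =
      Finset.univ.inf' ⟨⟨0, hN⟩, Finset.mem_univ _⟩ (fun i => spark (A i)) := by
  refine le_antisymm ?_ ?_
  · refine Finset.le_inf' _ _ fun i _ => ?_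
    obtain ⟨z, hz, hkz, hsz⟩ := kron_upper A hker i
    exact hsz ▸ spark_le_sparsity hz hkz
  · obtain ⟨z0, hz0, hkz0, -⟩ := kron_upper A hker ⟨0, hN⟩
    obtain ⟨x, hx, hkx, hsx⟩ := spark_exists ⟨z0, hz0, hkz0⟩
    obtain ⟨i, y, hy, hAy, hsy⟩ := kron_lower A x hx hkx
    calc Finset.univ.inf' _ (fun i => spark (A i)) ≤ spark (A i) :=
          Finset.inf'_le _ (Finset.mem_univ i)
      _ ≤ sparsity y := spark_le_sparsity hy hAy
      _ ≤ sparsity x := hsy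
      _ = spark (kronFamily A) := hsx
end

section
/- For matrices A₁, …, A_N with unit-norm columns, M(A₁ ⊗ ⋯ ⊗ A_N) = max over 1 ≤ i ≤ N of M(A_i). -/
open Classical Kronecker

section aux

variable {m n : Type*} [Fintype m] [Fintype n]

lemma mutIncSet_finite (A : Matrix m n ℝ) :
    {v | ∃ i j, i ≠ j ∧ v = |∑ k, A k i * A k j|}.Finite := by
  have hsub : {v | ∃ i j, i ≠ j ∧ v = |∑ k, A k i * A k j|} ⊆
      (fun p : n × n => |∑ k, A k p.1 * A k p.2|) '' Set.univ := by
    rintro v ⟨i, j, _, rfl⟩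
    exact ⟨(i, j), trivial, rfl⟩
  exact (Set.finite_univ.image _).subset hsub

lemma abs_le_mutInc (A : Matrix m n ℝ) {i j : n} (hij : i ≠ j) :
    |∑ k, A k i * A k j| ≤ mutInc A :=
  le_csSup (mutIncSet_finite A).bddAbove ⟨i, j, hij, rfl⟩

lemma mutInc_attained (A : Matrix m n ℝ) (h : ∃ i j : n, i ≠ j) :
    ∃ i j, i ≠ j ∧ mutInc A = |∑ k, A k i * A k j| := by
  obtain ⟨i, j, hij⟩ := h
  have hne : {v | ∃ i j, i ≠ j ∧ v = |∑ k, A k i * A k j|}.Nonempty :=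
    ⟨_, ⟨i, j, hij, rfl⟩⟩
  exact hne.csSup_mem (mutIncSet_finite A)

omit [Fintype n] in
lemma abs_inner_le_one (A : Matrix m n ℝ) (hA : ∀ j, ∑ k, (A k j) ^ 2 = 1) (i j : n) :
    |∑ k, A k i * A k j| ≤ 1 := by
  have := Finset.sum_mul_sq_le_sq_mul_sq Finset.univ (fun k => A k i) (fun k => A k j)
  rw [hA i, hA j, one_mul] at this
  nlinarith [abs_nonneg (∑ k, A k i * A k j), sq_abs (∑ k, A k i * A k j)]

end aux

theorem stmt11 {N : ℕ} (hN : 0 < N) {m n : Fin N → ℕ} (hn : ∀ i, 2 ≤ n i)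
    (A : ∀ i, Matrix (Fin (m i)) (Fin (n i)) ℝ)
    (hA : ∀ i j, ∑ k, (A i k j) ^ 2 = 1) :
    mutInc (kronFamily A) =
      Finset.univ.sup' ⟨⟨0, hN⟩, Finset.mem_univ _⟩ (fun i => mutInc (A i)) := by
  have hpos : ∀ i, 0 < n i := fun i => lt_of_lt_of_le two_pos (hn i)
  have hone : ∀ i, 1 < n i := fun i => lt_of_lt_of_le one_lt_two (hn i)
  set K := kronFamily A with hK
  -- key computation: inner products of columns of K factor
  have hfac : ∀ c d : ∀ i, Fin (n i),
      ∑ r, K r c * K r d = ∏ i, ∑ k, A i k (c i) * A i k (d i) := by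
    intro c d
    simp only [hK, kronFamily, ← Finset.prod_mul_distrib]
    exact (Fintype.prod_sum (fun i k => A i k (c i) * A i k (d i))).symm
  -- base column: all-zero index
  set base : ∀ i, Fin (n i) := fun i => ⟨0, hpos i⟩ with hbase
  -- the set defining mutInc K is nonempty
  set i0 : Fin N := ⟨0, hN⟩ with hi0
  have hne : {v | ∃ c d, c ≠ d ∧ v = |∑ r, K r c * K r d|}.Nonempty := by
    refine ⟨_, base, Function.update base i0 ⟨1, hone i0⟩, ?_, rfl⟩
    intro hcd
    have := congrFun hcd i0
    rw [Function.update_self] at this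
    simp [hbase, Fin.ext_iff] at this
  -- lower bound: each mutInc (A i) ≤ mutInc K
  have hlow : ∀ i : Fin N, mutInc (A i) ≤ mutInc K := by
    intro i
    obtain ⟨p, q, hpq, hval⟩ := mutInc_attained (A i)
      ⟨⟨0, hpos i⟩, ⟨1, hone i⟩, by simp [Fin.ext_iff]⟩
    set c : ∀ j, Fin (n j) := Function.update base i p with hc
    set d : ∀ j, Fin (n j) := Function.update base i q with hd
    have hcd : c ≠ d := by
      intro h
      have := congrFun h i
      rw [hc, hd, Function.update_self, Function.update_self] at this
      exact hpq this
    have hcalc : |∑ r, K r c * K r d| = mutInc (A i) := by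
      rw [hfac c d, Finset.abs_prod,
        ← Finset.mul_prod_erase Finset.univ _ (Finset.mem_univ i)]
      have h1 : ∀ j ∈ Finset.univ.erase i, |∑ k, A j k (c j) * A j k (d j)| = 1 := by
        intro j hj
        have hji : j ≠ i := Finset.mem_erase.mp hj |>.1
        rw [hc, hd, Function.update_of_ne hji, Function.update_of_ne hji]
        have : ∑ k, A j k (base j) * A j k (base j) = 1 := by
          rw [← hA j (base j)]; congr 1; ext k; ring
        rw [this, abs_one]
      rw [Finset.prod_congr rfl h1, Finset.prod_const_one, mul_one, hc, hd,
        Function.update_self, Function.update_self, hval]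
    calc mutInc (A i) = |∑ r, K r c * K r d| := hcalc.symm
      _ ≤ mutInc K := abs_le_mutInc K hcd
  -- upper bound
  have hup : mutInc K ≤ Finset.univ.sup' ⟨⟨0, hN⟩, Finset.mem_univ _⟩
      (fun i => mutInc (A i)) := by
    refine csSup_le hne ?_
    rintro v ⟨c, d, hcd, rfl⟩
    obtain ⟨j0, hj0⟩ := Function.ne_iff.mp hcd
    set g : Fin N → ℝ := fun i => ∑ k, A i k (c i) * A i k (d i) with hg
    have hgle1 : ∀ i, |g i| ≤ 1 := fun i => abs_inner_le_one (A i) (hA i) _ _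
    have hP0 : 0 ≤ ∏ j ∈ Finset.univ.erase j0, |g j| :=
      Finset.prod_nonneg fun j _ => abs_nonneg _
    have hP1 : ∏ j ∈ Finset.univ.erase j0, |g j| ≤ 1 :=
      Finset.prod_le_one (fun j _ => abs_nonneg _) (fun j _ => hgle1 j)
    have hmu0 : 0 ≤ mutInc (A j0) := le_trans (abs_nonneg _) (abs_le_mutInc (A j0) hj0)
    have : |∑ r, K r c * K r d| = ∏ i, |g i| := by
      rw [hfac c d, Finset.abs_prod]
    rw [this, ← Finset.mul_prod_erase Finset.univ _ (Finset.mem_univ j0)]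
    calc |g j0| * ∏ j ∈ Finset.univ.erase j0, |g j|
        ≤ mutInc (A j0) * 1 :=
          mul_le_mul (abs_le_mutInc (A j0) hj0) hP1 hP0 hmu0
      _ = mutInc (A j0) := mul_one _
      _ ≤ _ := Finset.le_sup' (fun i => mutInc (A i)) (Finset.mem_univ j0)
  exact le_antisymm hup (Finset.sup'_le _ _ fun i _ => hlow i)
end
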